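/- For every real a > 0, the function x ↦ x/tanh(a·x) is monotone increasing on (0, ∞). -/

import Mathlib

open Real Set

theorem stmt_8 (a : ℝ) (ha : 0 < a) :
    MonotoneOn (fun x : ℝ => x / Real.tanh (a * x)) (Set.Ioi 0) := by
  have key : StrictMonoOn (fun x : ℝ => x * Real.cosh (a * x) / Real.sinh (a * x))
      (Set.Ioi 0) := by
    apply strictMonoOn_of_deriv_pos (convex_Ioi 0)
    · apply ContinuousOn.div
      · fun_prop
      · fun_prop
      · intro x hx
        exact (Real.sinh_pos_iff.mpr (mul_pos ha hx)).ne'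
    · intro x hx
      rw [interior_Ioi, Set.mem_Ioi] at hx
      have ht : 0 < a * x := mul_pos ha hx
      have hs : 0 < Real.sinh (a * x) := Real.sinh_pos_iff.mpr ht
      have h1 : HasDerivAt (fun x : ℝ => a * x) a x := by
        simpa using (hasDerivAt_id x).const_mul a
      have hsinh : HasDerivAt (fun x : ℝ => Real.sinh (a * x))
          (Real.cosh (a * x) * a) x := (Real.hasDerivAt_sinh (a * x)).comp x h1
      have hcosh : HasDerivAt (fun x : ℝ => Real.cosh (a * x))
          (Real.sinh (a * x) * a) x := (Real.hasDerivAt_cosh (a * x)).comp x h1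
      have hnum : HasDerivAt (fun x : ℝ => x * Real.cosh (a * x))
          (1 * Real.cosh (a * x) + x * (Real.sinh (a * x) * a)) x :=
        (hasDerivAt_id x).mul hcosh
      have hg : HasDerivAt (fun x : ℝ => x * Real.cosh (a * x) / Real.sinh (a * x)) _ x :=
        hnum.div hsinh hs.ne'
      rw [hg.deriv]
      apply div_pos
      · have hlt : a * x < Real.sinh (a * x) := Real.self_lt_sinh_iff.mpr ht
        have hc1 : 1 ≤ Real.cosh (a * x) := Real.one_le_cosh (a * x)
        have hsq : Real.cosh (a * x) ^ 2 = Real.sinh (a * x) ^ 2 + 1 := Real.cosh_sq (a * x)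
        nlinarith [Real.cosh_pos (a * x), hs]
      · positivity
  intro x hx y hy hxy
  have hex : ∀ z ∈ Set.Ioi (0:ℝ), z / Real.tanh (a * z)
      = z * Real.cosh (a * z) / Real.sinh (a * z) := by
    intro z hz
    rw [Real.tanh_eq_sinh_div_cosh, div_div_eq_mul_div]
  simp only
  rw [hex x hx, hex y hy]
  exact key.monotoneOn hx hy hxy
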